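/- For k odd, the tuples (a_1,...,a_k) of nonnegative integers satisfying a_1 ≤ n and a_{i-1}+a_i ≤ n for 2 ≤ i ≤ k (with a_0 = 0) that achieve the maximum sum n(k+1)/2 are exactly the single tuple (n, 0, n, 0, ..., 0, n). -/

import Mathlib

/-- Non-attacking rook placement on the linear chained board `B⁻_{n,k}`:
rooks are triples (board, row, column). -/
def LinNonAtt (n k : ℕ) (R : Finset (Fin k × Fin n × Fin n)) : Prop :=
  (∀ r ∈ R, ∀ s ∈ R, r ≠ s → r.1 = s.1 → r.2.1 ≠ s.2.1 ∧ r.2.2 ≠ s.2.2) ∧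
  (∀ r ∈ R, ∀ s ∈ R, (r.1 : ℕ) + 1 = (s.1 : ℕ) → r.2.1 ≠ s.2.2)

/-- Non-attacking rook placement on the circular chained board `B°_{n,k}`. -/
def CircNonAtt (n k : ℕ) (R : Finset (Fin k × Fin n × Fin n)) : Prop :=
  (∀ r ∈ R, ∀ s ∈ R, r ≠ s → r.1 = s.1 → r.2.1 ≠ s.2.1 ∧ r.2.2 ≠ s.2.2) ∧
  (∀ r ∈ R, ∀ s ∈ R, ((r.1 : ℕ) + 1) % k = (s.1 : ℕ) → r.2.1 ≠ s.2.2)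

/-- Number of rooks of `R` on board `i`. -/
def bCount {n k : ℕ} (R : Finset (Fin k × Fin n × Fin n)) (i : Fin k) : ℕ :=
  (R.filter fun r => r.1 = i).card

/-- `a_{i-1}` with the convention `a_0 = 0` (linear case). -/
def prevL {k : ℕ} (a : Fin k → ℕ) (i : Fin k) : ℕ :=
  if i.val = 0 then 0
  else a ⟨i.val - 1, Nat.lt_of_le_of_lt (Nat.sub_le _ _) i.isLt⟩

/-- `a_{i-1}` with cyclic index convention (circular case). -/
def prevC {k : ℕ} (a : Fin k → ℕ) (i : Fin k) : ℕ :=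
  a ⟨(i.val + (k - 1)) % k, Nat.mod_lt _ i.pos⟩

private lemma sum_pairs' (b : ℕ → ℕ) (m : ℕ) :
    ∑ i ∈ Finset.range (2*m+2), b i = ∑ j ∈ Finset.range (m+1), (b (2*j) + b (2*j+1)) := by
  induction m with
  | zero => simp [Finset.sum_range_succ]
  | succ m ih =>
    have h1 : 2*(m+1)+2 = (2*m+2) + 1 + 1 := by ring
    rw [h1, Finset.sum_range_succ, Finset.sum_range_succ,
      Finset.sum_range_succ (fun j => b (2*j) + b (2*j+1)) (m+1), ih]
    ring_nf

private lemma sum_split' (b : ℕ → ℕ) (m : ℕ) :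
    ∑ i ∈ Finset.range (2*m+1), b i = b 0 + ∑ j ∈ Finset.range m, (b (2*j+1) + b (2*j+2)) := by
  induction m with
  | zero => simp
  | succ m ih =>
    have h1 : 2*(m+1)+1 = (2*m+1) + 1 + 1 := by ring
    rw [h1, Finset.sum_range_succ, Finset.sum_range_succ, ih, Finset.sum_range_succ]
    have e1 : 2*m+1+1 = 2*m+2 := by ring
    have e2 : 2*m+1 = 2*m+1 := rfl
    rw [e1]
    ring

private lemma sum_alt' (n : ℕ) (m : ℕ) :
    ∑ i ∈ Finset.range (2*m+1), (if i % 2 = 0 then n else 0) = n*(m+1) := by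
  induction m with
  | zero => simp
  | succ m ih =>
    have h1 : 2*(m+1)+1 = (2*m+1) + 1 + 1 := by ring
    rw [h1, Finset.sum_range_succ, Finset.sum_range_succ, ih]
    have h2 : (2*m+1) % 2 = 1 := by omega
    have h3 : (2*m+1+1) % 2 = 0 := by omega
    rw [h2, h3]
    simp
    ring

/-- For `k` odd, the only linear composition achieving the maximum sum `n(k+1)/2`
is `(n, 0, n, 0, ..., 0, n)`. -/
theorem linear_max_compositions_k_odd (n k : ℕ) (hn : 0 < n) (hko : Odd k)
    (a : Fin k → ℕ) :
    ((∀ i, prevL a i + a i ≤ n) ∧ (∑ i, a i) = n * ((k + 1) / 2)) ↔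
      ∀ i : Fin k, a i = if i.val % 2 = 0 then n else 0 := by
  obtain ⟨m, hm⟩ := hko
  subst hm
  have hdiv : (2*m+1+1)/2 = m + 1 := by omega
  set b : ℕ → ℕ := fun i => if h : i < 2*m+1 then a ⟨i, h⟩ else 0 with hbdef
  have hb : ∀ (i : ℕ) (h : i < 2*m+1), b i = a ⟨i, h⟩ := by
    intro i h; simp only [hbdef]; exact dif_pos h
  have hb0 : ∀ i : ℕ, 2*m+1 ≤ i → b i = 0 := by
    intro i h; simp [hbdef]; omega
  have hsum_eq : (∑ i : Fin (2*m+1), a i) = ∑ i ∈ Finset.range (2*m+1), b i := by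
    rw [← Fin.sum_univ_eq_sum_range (fun i => b i) (2*m+1)]
    refine Finset.sum_congr rfl fun i _ => ?_
    exact (hb i i.isLt).symm
  constructor
  · rintro ⟨hle, hsum⟩
    rw [hdiv] at hsum
    have hsum' : ∑ i ∈ Finset.range (2*m+1), b i = n * (m+1) := by
      rw [← hsum_eq]; exact hsum
    have hbn : ∀ i, b i ≤ n := by
      intro i
      by_cases h : i < 2*m+1
      · have h2 := hle ⟨i, h⟩
        rw [hb i h]; omega
      · rw [hb0 i (by omega)]; omega
    have hpair : ∀ i : ℕ, i + 1 < 2*m+1 → b i + b (i+1) ≤ n := by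
      intro i h
      have h' : i < 2*m+1 := by omega
      have h2 := hle ⟨i+1, h⟩
      simp only [prevL] at h2
      rw [if_neg (by omega : ¬ (i+1) = 0)] at h2
      simp only [Nat.add_sub_cancel] at h2
      rw [hb i h', hb (i+1) h]
      exact h2
    have hP : ∀ j : ℕ, b (2*j) + b (2*j+1) ≤ n := by
      intro j
      by_cases h : 2*j+1 < 2*m+1
      · exact hpair _ h
      · rw [hb0 (2*j+1) (by omega)]
        simpa using hbn (2*j)
    have hQ : ∀ j < m, b (2*j+1) + b (2*j+2) ≤ n := by
      intro j hj
      exact hpair (2*j+1) (by omega)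
    have hS1 : ∑ j ∈ Finset.range (m+1), (b (2*j) + b (2*j+1)) = n * (m+1) := by
      rw [← sum_pairs' b m]
      have : (2*m+2) = (2*m+1) + 1 := by ring
      rw [this, Finset.sum_range_succ, hsum', hb0 (2*m+1) (le_refl _)]
      ring
    have hS2 : b 0 + ∑ j ∈ Finset.range m, (b (2*j+1) + b (2*j+2)) = n * (m+1) := by
      rw [← sum_split' b m]; exact hsum'
    -- b 0 = n
    have hQsum_le : ∑ j ∈ Finset.range m, (b (2*j+1) + b (2*j+2)) ≤ m * n := by
      calc ∑ j ∈ Finset.range m, (b (2*j+1) + b (2*j+2))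
          ≤ ∑ j ∈ Finset.range m, n :=
            Finset.sum_le_sum fun j hj => hQ j (Finset.mem_range.mp hj)
        _ = m * n := by simp [mul_comm]
    have hb0n : b 0 = n := by
      have h1 : n * (m+1) = m * n + n := by ring
      have h2 := hbn 0
      omega
    have hQe : ∀ j ∈ Finset.range m, b (2*j+1) + b (2*j+2) = n := by
      have hsum2 : ∑ j ∈ Finset.range m, (b (2*j+1) + b (2*j+2)) =
          ∑ j ∈ Finset.range m, n := by
        have h1 : n * (m+1) = m * n + n := by ring
        have h2 : ∑ j ∈ Finset.range m, n = m * n := by simp [mul_comm]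
        omega
      exact fun j hj =>
        ((Finset.sum_eq_sum_iff_of_le fun j hj => hQ j (Finset.mem_range.mp hj)).mp hsum2) j hj
    have hPe : ∀ j ∈ Finset.range (m+1), b (2*j) + b (2*j+1) = n := by
      have hsum2 : ∑ j ∈ Finset.range (m+1), (b (2*j) + b (2*j+1)) =
          ∑ j ∈ Finset.range (m+1), n := by
        have h2 : ∑ j ∈ Finset.range (m+1), n = (m+1) * n := by simp [mul_comm]
        rw [hS1, h2]; ring
      exact fun j hj =>
        ((Finset.sum_eq_sum_iff_of_le fun j _ => hP j).mp hsum2) j hj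
    have hC : ∀ j : ℕ, j ≤ m → b (2*j) = n ∧ b (2*j+1) = 0 := by
      intro j
      induction j with
      | zero =>
        intro _
        have hp := hPe 0 (Finset.mem_range.mpr (by omega))
        norm_num at hp
        norm_num
        omega
      | succ j ih =>
        intro h
        obtain ⟨h1, h2⟩ := ih (by omega)
        have hq := hQe j (Finset.mem_range.mpr (by omega))
        have hp := hPe (j+1) (Finset.mem_range.mpr (by omega))
        have e1 : 2*(j+1) = 2*j+2 := by ring
        rw [e1] at hp ⊢
        constructor <;> omega
    intro i
    have hi := i.isLt
    have hbi : b i.val = a i := by simp only [hbdef]; exact dif_pos i.isLt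
    rw [← hbi]
    rcases Nat.even_or_odd i.val with he | ho
    · obtain ⟨j, hj⟩ := he
      rw [if_pos (by omega)]
      rw [show (i : ℕ) = 2*j from by omega]
      exact (hC j (by omega)).1
    · obtain ⟨j, hj⟩ := ho
      rw [if_neg (by omega)]
      rw [show (i : ℕ) = 2*j+1 from by omega]
      exact (hC j (by omega)).2
  · intro h
    constructor
    · intro i
      rw [h i]
      unfold prevL
      by_cases hi0 : i.val = 0
      · simp [hi0]
      · rw [if_neg hi0, h ⟨i.val - 1, Nat.lt_of_le_of_lt (Nat.sub_le _ _) i.isLt⟩]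
        by_cases hp : i.val % 2 = 0
        · have h1 : (i.val - 1) % 2 = 1 := by omega
          simp [hp, h1]
        · have h1 : (i.val - 1) % 2 = 0 := by omega
          simp [hp, h1]
    · have : (∑ i : Fin (2*m+1), a i) =
          ∑ i : Fin (2*m+1), (if i.val % 2 = 0 then n else 0) :=
        Finset.sum_congr rfl fun i _ => h i
      rw [this, hdiv, Fin.sum_univ_eq_sum_range (fun i => if i % 2 = 0 then n else 0) (2*m+1)]
      exact sum_alt' n m
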